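/- For real x with −κ < x < 1 (where κ > 1 solves κ·log κ − κ = 1), lim_{n→∞} ∑_{k=0}^{n} χ_n(k)·x^k = 1/(1−x). In particular the geometric series is χ-summable to 1/(1−x) throughout (−κ, 1), a strictly larger domain than (−1, 1). -/

import Mathlib

open MeasureTheory Real Set Filter Finset

noncomputable def chi (n k : ℕ) : ℝ := ∏ j ∈ Finset.range k, (1 - (j : ℝ) / n)

lemma integrable_tk (k : ℕ) : IntegrableOn (fun t : ℝ => t ^ k * Real.exp (-t)) (Ioi 0) := by
  have h := Real.GammaIntegral_convergent (s := (k : ℝ) + 1) (by positivity)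
  have e : (fun x : ℝ => Real.exp (-x) * x ^ ((k : ℝ) + 1 - 1)) =
      fun t : ℝ => t ^ k * Real.exp (-t) := by
    funext t; rw [add_sub_cancel_right, Real.rpow_natCast]; ring
  rwa [e] at h

lemma integral_tk (k : ℕ) : ∫ t in Ioi (0:ℝ), t ^ k * Real.exp (-t) = (k.factorial : ℝ) := by
  have h := (Real.Gamma_eq_integral (s := (k : ℝ) + 1) (by positivity)).symm
  have e : (fun x : ℝ => Real.exp (-x) * x ^ ((k : ℝ) + 1 - 1)) =
      fun t : ℝ => t ^ k * Real.exp (-t) := by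
    funext t; rw [add_sub_cancel_right, Real.rpow_natCast]; ring
  rw [e, Real.Gamma_nat_eq_factorial] at h
  exact h

lemma chi_eq {n k : ℕ} (hn : 0 < n) (hk : k ≤ n) :
    chi n k = (n.choose k : ℝ) * (k.factorial : ℝ) / n ^ k := by
  have hn' : (n : ℝ) ≠ 0 := Nat.cast_ne_zero.mpr hn.ne'
  have h1 : chi n k = (∏ j ∈ range k, ((n : ℝ) - j)) / n ^ k := by
    have hpow : ((n:ℝ))^k = ∏ _j ∈ range k, (n:ℝ) := by
      rw [Finset.prod_const, Finset.card_range]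
    rw [chi, eq_div_iff (by positivity), hpow, ← Finset.prod_mul_distrib]
    exact Finset.prod_congr rfl fun j _ => by field_simp
  have h2 : (∏ j ∈ range k, ((n : ℝ) - j)) = (n.descFactorial k : ℝ) := by
    rw [Nat.descFactorial_eq_prod_range, Nat.cast_prod]
    exact Finset.prod_congr rfl fun j hj =>
      (Nat.cast_sub ((Finset.mem_range.mp hj).le.trans hk)).symm
  rw [h1, h2, Nat.descFactorial_eq_factorial_mul_choose]
  push_cast; ring

lemma key_ineq {κ : ℝ} (hκ1 : 1 < κ) (hκ : κ * Real.log κ - κ = 1) {u : ℝ} (hu : 0 ≤ u) :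
    |1 - u| ≤ Real.exp (u / κ) := by
  have hκ0 : (0:ℝ) < κ := by linarith
  rcases le_or_gt u 2 with h | h
  · calc |1 - u| ≤ 1 := by rw [abs_le]; constructor <;> linarith
    _ ≤ Real.exp (u / κ) := by
        rw [← Real.exp_zero]; exact Real.exp_le_exp.mpr (by positivity)
  · have h1 : (0:ℝ) < u - 1 := by linarith
    have habs : |1 - u| = u - 1 := by rw [abs_sub_comm]; exact abs_of_pos h1
    rw [habs]
    have hlog : Real.log (u - 1) ≤ u / κ := by
      have h2 : Real.log ((u-1)/κ) ≤ (u-1)/κ - 1 :=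
        Real.log_le_sub_one_of_pos (by positivity)
      rw [Real.log_div h1.ne' hκ0.ne'] at h2
      have hlogκ : Real.log κ = 1 + 1/κ := by field_simp; linarith [hκ]
      have h3 : (u - 1)/κ - 1 + (1 + 1/κ) = u/κ := by field_simp; ring
      linarith
    calc u - 1 = Real.exp (Real.log (u-1)) := (Real.exp_log h1).symm
    _ ≤ Real.exp (u / κ) := Real.exp_le_exp.mpr hlog

lemma sum_eq_integral {n : ℕ} (hn : 0 < n) (x : ℝ) :
    ∑ k ∈ Finset.range (n + 1), chi n k * x ^ k
      = ∫ t in Ioi (0:ℝ), (1 + t * x / n) ^ n * Real.exp (-t) := by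
  have hn' : (n : ℝ) ≠ 0 := Nat.cast_ne_zero.mpr hn.ne'
  have hexp : (fun t : ℝ => (1 + t * x / n) ^ n * Real.exp (-t))
      = fun t : ℝ => ∑ k ∈ range (n+1),
        ((x / n) ^ k * (n.choose k : ℝ)) * (t ^ k * Real.exp (-t)) := by
    funext t
    rw [show (1 : ℝ) + t * x / n = t * x / n + 1 by ring, add_pow, Finset.sum_mul]
    refine Finset.sum_congr rfl fun k _ => ?_
    rw [one_pow, mul_one]
    field_simp
    ring
  rw [hexp, integral_finset_sum _ fun k _ => ((integrable_tk k).const_mul _)]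
  refine Finset.sum_congr rfl fun k hk => ?_
  rw [MeasureTheory.integral_const_mul, integral_tk, chi_eq hn (Nat.lt_succ_iff.mp (Finset.mem_range.mp hk)),
    div_pow]
  ring

theorem chi_geometric_summable (κ : ℝ) (hκ1 : 1 < κ) (hκ : κ * Real.log κ - κ = 1)
    (x : ℝ) (hx1 : -κ < x) (hx2 : x < 1) :
    Filter.Tendsto (fun n : ℕ => ∑ k ∈ Finset.range (n + 1), chi n k * x ^ k)
      Filter.atTop (nhds (1 / (1 - x))) := by
  have hκ0 : (0:ℝ) < κ := by linarith
  set c : ℝ := max x (-x / κ) with hc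
  have hc1 : c < 1 := max_lt hx2 (by rw [div_lt_one hκ0]; linarith)
  have hc0 : 0 ≤ c := by
    rcases le_or_gt 0 x with h | h
    · exact h.trans (le_max_left _ _)
    · exact le_trans (div_nonneg (by linarith) hκ0.le) (le_max_right _ _)
  set F : ℕ → ℝ → ℝ := fun n t => (1 + t * x / n) ^ n * Real.exp (-t) with hF
  have hbound : ∀ n : ℕ, ∀ t ∈ Ioi (0:ℝ), ‖F n t‖ ≤ Real.exp (-(1-c) * t) := by
    intro n t ht
    have ht0 : (0:ℝ) < t := ht
    have habs : ‖F n t‖ = |1 + t * x / n| ^ n * Real.exp (-t) := by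
      rw [hF]; simp [abs_mul, abs_pow, abs_of_pos (Real.exp_pos _)]
    have hkey : |1 + t * x / n| ^ n ≤ Real.exp (c * t) := by
      rcases Nat.eq_zero_or_pos n with h0 | hn
      · subst h0; simpa using Real.one_le_exp (by positivity)
      · have hnn : (0:ℝ) < n := Nat.cast_pos.mpr hn
        have hstep : |1 + t * x / n| ≤ Real.exp (c * t / n) := by
          rcases le_or_gt 0 x with hx | hx
          · have h1 : (0:ℝ) ≤ 1 + t * x / n := by positivity
            rw [abs_of_nonneg h1]
            calc 1 + t * x / n ≤ Real.exp (t * x / n) := by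
                  have := Real.add_one_le_exp (t * x / n); linarith
            _ ≤ Real.exp (c * t / n) := by
                  apply Real.exp_le_exp.mpr
                  have hxc : x ≤ c := le_max_left _ _
                  rw [div_le_div_iff₀ hnn hnn]
                  nlinarith [mul_le_mul_of_nonneg_right
                    (mul_le_mul_of_nonneg_left hxc ht0.le) hnn.le]
          · have hu : 0 ≤ t * (-x) / n := div_nonneg (by nlinarith) hnn.le
            have := key_ineq hκ1 hκ hu
            have heq : 1 + t * x / n = 1 - t * (-x) / n := by ring
            rw [heq]
            refine this.trans (Real.exp_le_exp.mpr ?_)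
            have hxc : -x / κ ≤ c := le_max_right _ _
            rw [div_div]
            rw [div_le_div_iff₀ (by positivity) (by positivity)]
            have h2 : t * -x * n = ((-x)/κ) * t * (n * κ) := by field_simp
            rw [h2]
            nlinarith [mul_le_mul_of_nonneg_right
              (mul_le_mul_of_nonneg_right hxc ht0.le) (mul_nonneg hnn.le hκ0.le)]
        calc |1 + t * x / n| ^ n ≤ (Real.exp (c * t / n)) ^ n :=
              pow_le_pow_left₀ (abs_nonneg _) hstep n
        _ = Real.exp (n * (c * t / n)) := (Real.exp_nat_mul _ n).symm
        _ = Real.exp (c * t) := by rw [mul_div_cancel₀]; exact hnn.ne'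
    rw [habs]
    calc |1 + t * x / n| ^ n * Real.exp (-t) ≤ Real.exp (c*t) * Real.exp (-t) :=
          mul_le_mul_of_nonneg_right hkey (Real.exp_pos _).le
    _ = Real.exp (-(1-c) * t) := by rw [← Real.exp_add]; ring_nf
  have hDCT := MeasureTheory.tendsto_integral_of_dominated_convergence
      (μ := volume.restrict (Ioi (0:ℝ)))
      (F := F) (f := fun t => Real.exp (t * x) * Real.exp (-t))
      (fun t => Real.exp (-(1-c) * t))
      (fun n => (Continuous.aestronglyMeasurable (by fun_prop)))
      (exp_neg_integrableOn_Ioi 0 (by linarith : (0:ℝ) < 1 - c))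
      (fun n => (ae_restrict_iff' measurableSet_Ioi).mpr (Filter.Eventually.of_forall
        (hbound n)))
      ((ae_restrict_iff' measurableSet_Ioi).mpr (Filter.Eventually.of_forall
        (fun t _ => ((Real.tendsto_one_add_div_pow_exp (t * x)).mul_const _))))
  have hint : ∫ t in Ioi (0:ℝ), Real.exp (t * x) * Real.exp (-t) = 1 / (1 - x) := by
    have e : (fun t : ℝ => Real.exp (t * x) * Real.exp (-t))
        = fun t : ℝ => Real.exp (-((1-x) * t)) := by
      funext t; rw [← Real.exp_add]; ring_nf
    rw [e]
    have h := integral_exp_neg_mul_rpow (p := 1) one_pos (by linarith : (0:ℝ) < 1 - x)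
    simp only [Real.rpow_one, neg_mul] at h
    rw [h]
    norm_num [Real.Gamma_two, Real.rpow_neg_one, one_div]
  rw [hint] at hDCT
  refine hDCT.congr' ?_
  filter_upwards [eventually_ge_atTop 1] with n hn
  exact (sum_eq_integral hn x).symm
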